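/- Let n ≥ 1 be an integer and let H_m denote the (physicists') Hermite polynomial function H_m(t) = (-1)^m exp(t²) · (d^m/dt^m) exp(-t²). Suppose s, t ∈ ℝ with s < t and H_n has no zero on the interval [s, ∞) (equivalently, s exceeds the largest real zero of H_n, so H_n > 0 and H_{n-1} > 0 on [s, ∞)). Then the ratio ψ_n(x) = H_{n-1}(x)/H_n(x) satisfies 0 < ψ_n(t) < ψ_n(s); that is, ψ_n is strictly decreasing and positive to the right of the largest zero of H_n. Moreover ψ_n(x) → 0 as x → ∞. -/

import Mathlib

open Real Filter

/-- The physicists' Hermite polynomial function, via the Rodrigues formula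
`H_m(t) = (-1)^m exp(t²) (d^m/dt^m) exp(-t²)`. -/
noncomputable def hermiteFun (m : ℕ) (t : ℝ) : ℝ :=
  (-1 : ℝ) ^ m * Real.exp (t ^ 2) *
    iteratedDeriv m (fun s : ℝ => Real.exp (-s ^ 2)) t

/-- The physicists' Hermite polynomials, defined by the recurrence
`H_0 = 1`, `H_{m+1} = 2X H_m - H_m'`. -/
noncomputable def physH : ℕ → Polynomial ℝ
  | 0 => 1
  | m + 1 => 2 * Polynomial.X * physH m - Polynomial.derivative (physH m)

lemma physH_zero : physH 0 = 1 := rfl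

open Polynomial in
lemma physH_succ (m : ℕ) : physH (m + 1) = 2 * X * physH m - derivative (physH m) := rfl

open Polynomial in
lemma derivative_physH_eq (m : ℕ) :
    derivative (physH m) = 2 * X * physH m - physH (m + 1) := by
  rw [physH_succ]; ring

open Polynomial in
lemma derivative_physH_succ (m : ℕ) :
    derivative (physH (m + 1)) = Polynomial.C (2 * (m + 1) : ℝ) * physH m := by
  induction m with
  | zero =>
      rw [physH_succ, physH_zero]
      simp only [mul_one, Polynomial.derivative_one, sub_zero, Polynomial.derivative_mul,
        Polynomial.derivative_ofNat, Polynomial.derivative_X, zero_mul, mul_one, zero_add]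
      push_cast
      simp only [map_mul, map_add, map_one, map_ofNat]
      simp
  | succ m ih =>
      rw [physH_succ (m + 1), Polynomial.derivative_sub, ih]
      simp only [Polynomial.derivative_mul, Polynomial.derivative_ofNat,
        Polynomial.derivative_X, Polynomial.derivative_C, zero_mul, mul_one, zero_add,
        ih, derivative_physH_eq m]
      simp only [map_mul, map_add, map_one, map_ofNat, Polynomial.C_eq_natCast]
      push_cast
      ring

open Polynomial in
lemma ode_physH (m : ℕ) :
    derivative (derivative (physH m)) =
      2 * X * derivative (physH m) - Polynomial.C (2 * m : ℝ) * physH m := by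
  conv_lhs => rw [derivative_physH_eq m]
  rw [Polynomial.derivative_sub, Polynomial.derivative_mul, Polynomial.derivative_mul,
    derivative_physH_succ m]
  simp only [Polynomial.derivative_ofNat, Polynomial.derivative_X, zero_mul, mul_one, zero_add]
  simp only [map_mul, map_add, map_one, map_ofNat, Polynomial.C_eq_natCast]
  ring

lemma iteratedDeriv_gaussian (m : ℕ) :
    iteratedDeriv m (fun s : ℝ => Real.exp (-s ^ 2)) =
      fun t => (-1 : ℝ) ^ m * (physH m).eval t * Real.exp (-t ^ 2) := by
  induction m with
  | zero => funext t; simp [physH_zero]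
  | succ m ih =>
      rw [iteratedDeriv_succ, ih]
      funext t
      have hexp : HasDerivAt (fun t : ℝ => Real.exp (-t ^ 2))
          (Real.exp (-t ^ 2) * (-(2 * t))) t := by
        have h1 : HasDerivAt (fun t : ℝ => -t ^ 2) (-(2 * t)) t := by
          simpa using ((hasDerivAt_pow 2 t).fun_neg)
        simpa using h1.exp
      have hP : HasDerivAt (fun t : ℝ => (physH m).eval t)
          ((Polynomial.derivative (physH m)).eval t) t := (physH m).hasDerivAt t
      have := ((hP.const_mul ((-1 : ℝ) ^ m)).fun_mul hexp).deriv
      rw [this]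
      rw [show Polynomial.derivative (physH m) = 2 * Polynomial.X * physH m - physH (m+1)
        from derivative_physH_eq m]
      simp only [Polynomial.eval_sub, Polynomial.eval_mul, Polynomial.eval_ofNat,
        Polynomial.eval_X]
      ring

lemma hermiteFun_eq (m : ℕ) (t : ℝ) : hermiteFun m t = (physH m).eval t := by
  rw [hermiteFun, iteratedDeriv_gaussian]
  have h1 : Real.exp (t ^ 2) * Real.exp (-t ^ 2) = 1 := by
    rw [← Real.exp_add]; simp
  have h2 : ((-1 : ℝ) ^ m) * ((-1 : ℝ) ^ m) = 1 := by
    rw [← pow_add]; exact Even.neg_one_pow ⟨m, rfl⟩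
  calc (-1 : ℝ) ^ m * Real.exp (t ^ 2) *
        ((-1 : ℝ) ^ m * (physH m).eval t * Real.exp (-t ^ 2))
      = ((-1 : ℝ) ^ m * (-1 : ℝ) ^ m) * (Real.exp (t ^ 2) * Real.exp (-t ^ 2)) *
        (physH m).eval t := by ring
    _ = (physH m).eval t := by rw [h1, h2]; ring

open Polynomial in
lemma physH_coeff_natDegree (m : ℕ) :
    (physH m).coeff m = 2 ^ m ∧ (physH m).natDegree ≤ m := by
  induction m with
  | zero => simp [physH_zero]
  | succ m ih =>
      obtain ⟨hc, hd⟩ := ih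
      constructor
      · rw [show physH (m+1) = 2 * X * physH m - derivative (physH m) from rfl]
        rw [Polynomial.coeff_sub]
        have h1 : (2 * X * physH m).coeff (m + 1) = 2 * (physH m).coeff m := by
          rw [mul_assoc, Polynomial.coeff_ofNat_mul, Polynomial.coeff_X_mul]
        have h2 : (derivative (physH m)).coeff (m + 1) = 0 := by
          apply Polynomial.coeff_eq_zero_of_natDegree_lt
          calc (derivative (physH m)).natDegree ≤ (physH m).natDegree - 1 :=
                Polynomial.natDegree_derivative_le _
            _ < m + 1 := by omega
        rw [h1, h2, hc]; ring
      · rw [show physH (m+1) = 2 * X * physH m - derivative (physH m) from rfl]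
        apply le_trans (Polynomial.natDegree_sub_le _ _)
        apply max_le
        · apply le_trans (Polynomial.natDegree_mul_le)
          have : (2 * X : ℝ[X]).natDegree ≤ 1 := by
            apply le_trans (Polynomial.natDegree_mul_le)
            simp
          omega
        · calc (derivative (physH m)).natDegree ≤ (physH m).natDegree - 1 :=
              Polynomial.natDegree_derivative_le _
            _ ≤ m + 1 := by omega

open Polynomial in
lemma physH_natDegree (m : ℕ) : (physH m).natDegree = m := by
  obtain ⟨hc, hd⟩ := physH_coeff_natDegree m
  refine le_antisymm hd (Polynomial.le_natDegree_of_ne_zero ?_)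
  rw [hc]; positivity

open Polynomial in
lemma physH_leadingCoeff (m : ℕ) : (physH m).leadingCoeff = 2 ^ m := by
  rw [Polynomial.leadingCoeff, physH_natDegree]
  exact (physH_coeff_natDegree m).1

open Polynomial in
lemma physH_ne_zero (m : ℕ) : physH m ≠ 0 := by
  intro h
  have := physH_leadingCoeff m
  rw [h, Polynomial.leadingCoeff_zero] at this
  exact absurd this.symm (ne_of_gt (by positivity))

lemma physH_eventually_pos (m : ℕ) : ∀ᶠ x in atTop, 0 < (physH m).eval x := by
  cases m with
  | zero => simp [physH_zero]
  | succ m =>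
      have hdeg : 0 < (physH (m+1)).degree := by
        rw [Polynomial.degree_eq_natDegree (physH_ne_zero (m+1)), physH_natDegree]
        exact_mod_cast Nat.succ_pos m
      have := Polynomial.tendsto_atTop_of_leadingCoeff_nonneg (physH (m+1)) hdeg
        (by rw [physH_leadingCoeff]; positivity)
      exact this.eventually_gt_atTop 0

open Polynomial in
lemma pos_on_Ici_of_nozero (p : ℝ[X]) (s : ℝ) (hev : ∀ᶠ x in atTop, 0 < p.eval x)
    (h : ∀ x, s ≤ x → p.eval x ≠ 0) : ∀ x, s ≤ x → 0 < p.eval x := by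
  intro x hx
  rcases (h x hx).lt_or_gt with hneg | hpos
  · exfalso
    obtain ⟨M, hM1, hM2⟩ := (hev.and (eventually_ge_atTop x)).exists
    obtain ⟨z, hz, hz0⟩ := intermediate_value_Icc hM2 (p.continuous_aeval).continuousOn
      (Set.mem_Icc.2 ⟨hneg.le, hM1.le⟩)
    exact h z (le_trans hx hz.1) hz0
  · exact hpos

open Polynomial in
lemma pos_on_Ici_of_neg_deriv_at_zero (p : ℝ[X]) (s : ℝ)
    (hev : ∀ᶠ x in atTop, 0 < p.eval x)
    (hder : ∀ x, s ≤ x → p.eval x = 0 → (derivative p).eval x < 0) :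
    ∀ x, s ≤ x → 0 < p.eval x := by
  by_contra hcon
  push_neg at hcon
  obtain ⟨x0, hx0s, hx0⟩ := hcon
  set Z : Set ℝ := {x | p.eval x = 0} ∩ Set.Ici x0 with hZ
  have hcont : Continuous fun x : ℝ => p.eval x := p.continuous_aeval
  have hZclosed : IsClosed Z := (isClosed_eq hcont continuous_const).inter isClosed_Ici
  have hZne : Z.Nonempty := by
    rcases eq_or_lt_of_le hx0 with heq | hlt
    · exact ⟨x0, heq, le_refl x0⟩
    · obtain ⟨M, hM1, hM2⟩ := (hev.and (eventually_ge_atTop x0)).exists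
      obtain ⟨z, hz, hz0⟩ := intermediate_value_Icc hM2 hcont.continuousOn
        (Set.mem_Icc.2 ⟨hlt.le, hM1.le⟩)
      exact ⟨z, hz0, hz.1⟩
  have hZbdd : BddAbove Z := by
    obtain ⟨B, hB⟩ := eventually_atTop.1 hev
    refine ⟨B, fun z hz => ?_⟩
    by_contra hzB
    exact (hB z (not_le.1 hzB).le).ne' hz.1
  set x1 := sSup Z with hx1def
  have hx1 : x1 ∈ Z := hZclosed.csSup_mem hZne hZbdd
  have hx1s : s ≤ x1 := le_trans hx0s hx1.2
  have hpos_right : ∀ x, x1 < x → 0 < p.eval x := by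
    intro x hx
    have hne : p.eval x ≠ 0 := by
      intro h0
      exact absurd (le_csSup hZbdd ⟨h0, le_trans hx1.2 hx.le⟩) (not_le.2 hx)
    rcases hne.lt_or_gt with hneg | hpos
    · exfalso
      obtain ⟨M, hM1, hM2⟩ := (hev.and (eventually_ge_atTop x)).exists
      obtain ⟨z, hz, hz0⟩ := intermediate_value_Icc hM2 hcont.continuousOn
        (Set.mem_Icc.2 ⟨hneg.le, hM1.le⟩)
      have hzZ : z ∈ Z := ⟨hz0, le_trans hx1.2 (le_trans hx.le hz.1)⟩
      exact absurd (le_csSup hZbdd hzZ) (not_le.2 (lt_of_lt_of_le hx hz.1))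
    · exact hpos
  have hd : (derivative p).eval x1 < 0 := hder x1 hx1s hx1.1
  have hda : HasDerivAt (fun x : ℝ => p.eval x) ((derivative p).eval x1) x1 :=
    p.hasDerivAt x1
  have htend : Tendsto (slope (fun x : ℝ => p.eval x) x1) (nhdsWithin x1 (Set.Ioi x1))
      (nhds ((derivative p).eval x1)) :=
    (hasDerivAt_iff_tendsto_slope.1 hda).mono_left
      (nhdsWithin_mono x1 (fun y hy => ne_of_gt hy))
  have hev2 : ∀ᶠ x in nhdsWithin x1 (Set.Ioi x1),
      slope (fun x : ℝ => p.eval x) x1 x < 0 := htend.eventually_lt_const hd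
  obtain ⟨x, hslope, hx⟩ := (hev2.and self_mem_nhdsWithin).exists
  rw [slope_def_field] at hslope
  have hxx1 : (0:ℝ) < x - x1 := sub_pos.2 hx
  have : p.eval x - p.eval x1 < 0 := by
    have h := mul_neg_of_neg_of_pos hslope hxx1
    rwa [div_mul_cancel₀ _ hxx1.ne'] at h
  rw [hx1.1, sub_zero] at this
  exact absurd (hpos_right x hx) (not_lt.2 this.le)

open Polynomial in
/-- The Wronskian-type polynomial `H_k' H_{k+1} - H_k H_{k+1}'`. -/
noncomputable def wron (k : ℕ) : Polynomial ℝ :=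
  derivative (physH k) * physH (k + 1) - physH k * derivative (physH (k + 1))

open Polynomial in
lemma derivative_wron (k : ℕ) :
    derivative (wron k) = 2 * X * wron k + Polynomial.C 2 * physH k * physH (k + 1) := by
  rw [wron, Polynomial.derivative_sub, Polynomial.derivative_mul, Polynomial.derivative_mul,
    ode_physH k, ode_physH (k + 1)]
  simp only [map_mul, map_ofNat, Polynomial.C_eq_natCast]
  push_cast
  ring

open Polynomial in
lemma wron_eval (k : ℕ) (x : ℝ) :
    (wron k).eval x = (derivative (physH k)).eval x * (physH (k+1)).eval x -
      (physH k).eval x * (derivative (physH (k+1))).eval x := by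
  simp [wron]

open Polynomial in
lemma wron_eval_neg (k : ℕ) (s : ℝ)
    (hP0 : ∀ x, s ≤ x → 0 < (physH k).eval x)
    (hP1 : ∀ x, s ≤ x → 0 < (physH (k+1)).eval x) :
    ∀ x, s ≤ x → (wron k).eval x < 0 := by
  set f : ℝ → ℝ := fun x => Real.exp (-x ^ 2) * (wron k).eval x with hf
  have hderiv : ∀ x : ℝ, HasDerivAt f
      (2 * Real.exp (-x ^ 2) * (physH k).eval x * (physH (k+1)).eval x) x := by
    intro x
    have hexp : HasDerivAt (fun t : ℝ => Real.exp (-t ^ 2))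
        (Real.exp (-x ^ 2) * (-(2 * x))) x := by
      have h1 : HasDerivAt (fun t : ℝ => -t ^ 2) (-(2 * x)) x := by
        simpa using ((hasDerivAt_pow 2 x).fun_neg)
      simpa using h1.exp
    have h := hexp.mul ((wron k).hasDerivAt x)
    have hkey : Real.exp (-x ^ 2) * (-(2 * x)) * (wron k).eval x +
        Real.exp (-x ^ 2) * (derivative (wron k)).eval x =
        2 * Real.exp (-x ^ 2) * (physH k).eval x * (physH (k+1)).eval x := by
      rw [derivative_wron k]
      simp only [Polynomial.eval_add, Polynomial.eval_mul, Polynomial.eval_ofNat,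
        Polynomial.eval_X, Polynomial.eval_C]
      ring
    rw [hkey] at h
    exact h
  have hcont : Continuous f := by
    exact ((Real.continuous_exp.comp ((continuous_pow 2).neg)).mul (wron k).continuous_aeval)
  have hmono : StrictMonoOn f (Set.Ici s) := by
    apply strictMonoOn_of_deriv_pos (convex_Ici s) hcont.continuousOn
    intro x hx
    rw [interior_Ici] at hx
    rw [(hderiv x).deriv]
    have h0 := hP0 x (le_of_lt hx)
    have h1 := hP1 x (le_of_lt hx)
    positivity
  have htend : Tendsto f atTop (nhds 0) := by
    apply squeeze_zero_norm' (a := fun x => |(wron k).eval x / Real.exp x|)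
    · filter_upwards [eventually_ge_atTop (1:ℝ)] with x hx
      have hxx : -x ^ 2 ≤ -x := by nlinarith
      have : Real.exp (-x ^ 2) ≤ Real.exp (-x) := Real.exp_le_exp.2 hxx
      have hnorm : ‖f x‖ = Real.exp (-x ^ 2) * |(wron k).eval x| := by
        rw [hf]
        simp [abs_mul, abs_of_pos (Real.exp_pos _)]
      rw [hnorm, abs_div, abs_of_pos (Real.exp_pos x), div_eq_mul_inv, ← Real.exp_neg]
      rw [mul_comm (|(wron k).eval x|)]
      exact mul_le_mul_of_nonneg_right this (abs_nonneg _)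
    · simpa using ((wron k).tendsto_div_exp_atTop).abs
  intro x hx
  have hxlt : f x < f (x + 1) :=
    hmono hx (by simp only [Set.mem_Ici]; linarith) (lt_add_one x)
  have hle : f (x + 1) ≤ 0 := by
    apply ge_of_tendsto htend
    filter_upwards [eventually_ge_atTop (x + 1)] with y hy
    exact hmono.monotoneOn (by simp only [Set.mem_Ici]; linarith)
      (by simp only [Set.mem_Ici]; linarith) hy
  have hfx : Real.exp (-x ^ 2) * (wron k).eval x < 0 := lt_of_lt_of_le hxlt hle
  nlinarith [Real.exp_pos (-x ^ 2), hfx]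

/-- To the right of the largest zero of `H_n`, the ratio
`ψ_n = H_{n-1}/H_n` is positive and strictly decreasing, and tends to `0`
at infinity. -/
theorem hermite_ratio_decreasing (n : ℕ) (hn : 1 ≤ n) (s t : ℝ) (hst : s < t)
    (hnozero : ∀ x : ℝ, s ≤ x → hermiteFun n x ≠ 0) :
    0 < hermiteFun (n - 1) t / hermiteFun n t ∧
      hermiteFun (n - 1) t / hermiteFun n t <
        hermiteFun (n - 1) s / hermiteFun n s ∧
      Tendsto (fun x : ℝ => hermiteFun (n - 1) x / hermiteFun n x)
        atTop (nhds 0) := by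
  obtain ⟨k, rfl⟩ : ∃ k, n = k + 1 := ⟨n - 1, by omega⟩
  simp only [hermiteFun_eq, Nat.add_sub_cancel] at hnozero ⊢
  have hP1 : ∀ x, s ≤ x → 0 < (physH (k+1)).eval x :=
    pos_on_Ici_of_nozero _ s (physH_eventually_pos (k+1)) hnozero
  have hP0 : ∀ x, s ≤ x → 0 < (physH k).eval x := by
    apply pos_on_Ici_of_neg_deriv_at_zero _ s (physH_eventually_pos k)
    intro x hx h0
    rw [derivative_physH_eq k]
    simp only [Polynomial.eval_sub, Polynomial.eval_mul, Polynomial.eval_ofNat,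
      Polynomial.eval_X, h0, mul_zero, zero_sub, neg_lt, neg_zero]
    exact hP1 x hx
  have hw := wron_eval_neg k s hP0 hP1
  have hpsider : ∀ x, s ≤ x → HasDerivAt
      (fun x => (physH k).eval x / (physH (k+1)).eval x)
      ((wron k).eval x / ((physH (k+1)).eval x) ^ 2) x := by
    intro x hx
    have h := ((physH k).hasDerivAt x).div ((physH (k+1)).hasDerivAt x) (hP1 x hx).ne'
    rw [wron_eval]
    exact h
  have hanti : StrictAntiOn (fun x => (physH k).eval x / (physH (k+1)).eval x)
      (Set.Ici s) := by
    apply strictAntiOn_of_deriv_neg (convex_Ici s)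
    · exact ContinuousOn.div ((physH k).continuous_aeval.continuousOn)
        ((physH (k+1)).continuous_aeval.continuousOn) (fun x hx => (hP1 x hx).ne')
    · intro x hx
      rw [interior_Ici] at hx
      rw [(hpsider x hx.le).deriv]
      exact div_neg_of_neg_of_pos (hw x hx.le) (pow_pos (hP1 x hx.le) 2)
  have hts : s ≤ t := hst.le
  refine ⟨div_pos (hP0 t hts) (hP1 t hts), hanti (Set.mem_Ici.2 le_rfl) (Set.mem_Ici.2 hts) hst, ?_⟩
  have hdeg : (physH k).degree < (physH (k+1)).degree := by
    rw [Polynomial.degree_eq_natDegree (physH_ne_zero k),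
      Polynomial.degree_eq_natDegree (physH_ne_zero (k+1)), physH_natDegree, physH_natDegree]
    exact_mod_cast Nat.lt_succ_self k
  exact Polynomial.div_tendsto_zero_of_degree_lt (physH k) (physH (k+1)) hdeg
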